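/- For every natural number n and every prime p, the p-adic valuation of q_n := lcm{ i_1 i_2 ⋯ i_k : k ≥ 1, i_1,...,i_k ≥ 1, i_1 + ⋯ + i_k ≤ n } equals ⌊n/p⌋; consequently q_n = ∏_{p prime} p^{⌊n/p⌋}. -/

import Mathlib

/-- `q n k` is the lcm of all products `i₁⋯i_k` over `k`-tuples of positive integers
with `i₁ + ⋯ + i_k ≤ n` (with `q n 0 = 1`). -/
def q (n k : ℕ) : ℕ :=
  ((Finset.range (n + 1)).biUnion
      (fun m => (Finset.Nat.antidiagonalTuple k m).filter (fun f => ∀ j, f j ≠ 0))).lcm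
    (fun f => ∏ j, f j)

/-- `qTot n` is the lcm of all products `i₁⋯i_k` over all `k` and all `k`-tuples of
positive integers with `i₁ + ⋯ + i_k ≤ n`. -/
def qTot (n : ℕ) : ℕ := (Finset.range (n + 1)).lcm (fun k => q n k)

private lemma aux_mul_le_pow {p : ℕ} (hp : 2 ≤ p) (v : ℕ) : v * p ≤ p ^ v := by
  cases v with
  | zero => simp
  | succ w =>
    have h1 : w + 1 ≤ p ^ w := Nat.lt_pow_self (by omega)
    calc (w + 1) * p ≤ p ^ w * p := Nat.mul_le_mul_right _ h1
      _ = p ^ (w + 1) := (pow_succ p w).symm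

private lemma fact_mul_le {p i : ℕ} (hp : p.Prime) (hi : i ≠ 0) :
    i.factorization p * p ≤ i := by
  calc i.factorization p * p ≤ p ^ i.factorization p := aux_mul_le_pow hp.two_le _
    _ ≤ i := Nat.ordProj_le p hi

private lemma finsetLcm_ne_zero {α : Type*} [DecidableEq α] {s : Finset α} {f : α → ℕ}
    (h : ∀ i ∈ s, f i ≠ 0) : s.lcm f ≠ 0 := by
  intro h0
  rw [Finset.lcm_eq_zero_iff] at h0
  obtain ⟨i, hi, hfi⟩ := h0
  exact h i hi hfi

private lemma factorization_finsetLcm_le {α : Type*} [DecidableEq α] {s : Finset α}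
    {f : α → ℕ} {p m : ℕ} (h0 : ∀ i ∈ s, f i ≠ 0)
    (h : ∀ i ∈ s, (f i).factorization p ≤ m) :
    (s.lcm f).factorization p ≤ m := by
  induction s using Finset.induction with
  | empty => simp
  | @insert a s ha ih =>
    rw [Finset.lcm_insert]
    have h1 : f a ≠ 0 := h0 a (Finset.mem_insert_self a s)
    have h2 : s.lcm f ≠ 0 :=
      finsetLcm_ne_zero (fun i hi => h0 i (Finset.mem_insert_of_mem hi))
    show (Nat.lcm (f a) (s.lcm f)).factorization p ≤ m
    rw [Nat.factorization_lcm h1 h2, Finsupp.sup_apply]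
    exact sup_le (h a (Finset.mem_insert_self a s))
      (ih (fun i hi => h0 i (Finset.mem_insert_of_mem hi))
        (fun i hi => h i (Finset.mem_insert_of_mem hi)))

theorem padicValNat_qTot (n : ℕ) :
    (∀ p : ℕ, p.Prime → padicValNat p (qTot n) = n / p) ∧
      qTot n = ∏ p ∈ (Finset.range (n + 1)).filter Nat.Prime, p ^ (n / p) := by
  have hq0 : ∀ k, q n k ≠ 0 := by
    intro k
    apply finsetLcm_ne_zero
    intro f hf
    simp only [Finset.mem_biUnion, Finset.mem_filter] at hf
    obtain ⟨m, _, _, hpos⟩ := hf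
    exact Finset.prod_ne_zero_iff.mpr (fun j _ => hpos j)
  have hqTot0 : qTot n ≠ 0 := finsetLcm_ne_zero (fun k _ => hq0 k)
  have hmain : ∀ p : ℕ, p.Prime → (qTot n).factorization p = n / p := by
    intro p hp
    apply le_antisymm
    · apply factorization_finsetLcm_le (fun k _ => hq0 k)
      intro k _
      apply factorization_finsetLcm_le
      · intro f hf
        simp only [Finset.mem_biUnion, Finset.mem_filter] at hf
        obtain ⟨m, _, _, hpos⟩ := hf
        exact Finset.prod_ne_zero_iff.mpr (fun j _ => hpos j)
      · intro f hf
        simp only [Finset.mem_biUnion, Finset.mem_filter,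
          Finset.Nat.mem_antidiagonalTuple, Finset.mem_range] at hf
        obtain ⟨m, hm, hsum, hpos⟩ := hf
        rw [Nat.factorization_prod (fun j _ => hpos j), Finsupp.finset_sum_apply,
          Nat.le_div_iff_mul_le hp.pos]
        calc (∑ j, (f j).factorization p) * p
            = ∑ j, (f j).factorization p * p := Finset.sum_mul _ _ _
          _ ≤ ∑ j, f j := Finset.sum_le_sum (fun j _ => fact_mul_le hp (hpos j))
          _ ≤ n := by omega
    · rw [← Nat.Prime.pow_dvd_iff_le_factorization hp hqTot0]
      have hmem1 : (fun _ : Fin (n / p) => p) ∈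
          (Finset.Nat.antidiagonalTuple (n / p) (n / p * p)).filter
            (fun f => ∀ j, f j ≠ 0) := by
        rw [Finset.mem_filter, Finset.Nat.mem_antidiagonalTuple]
        refine ⟨by simp [Finset.sum_const, Finset.card_univ], fun j => hp.ne_zero⟩
      have hmem2 : n / p * p ∈ Finset.range (n + 1) := by
        rw [Finset.mem_range]
        have := Nat.div_mul_le_self n p
        omega
      have hd1 : (∏ _j : Fin (n / p), p) ∣ q n (n / p) :=
        Finset.dvd_lcm (Finset.mem_biUnion.mpr ⟨_, hmem2, hmem1⟩)
      have hd2 : q n (n / p) ∣ qTot n :=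
        Finset.dvd_lcm (Finset.mem_range.mpr (Nat.lt_succ_of_le (Nat.div_le_self n p)))
      calc p ^ (n / p) = ∏ _j : Fin (n / p), p := by
            simp [Finset.prod_const, Finset.card_univ]
        _ ∣ qTot n := hd1.trans hd2
  set S := (Finset.range (n + 1)).filter Nat.Prime with hS
  have hR0 : (∏ p ∈ S, p ^ (n / p)) ≠ 0 := by
    apply Finset.prod_ne_zero_iff.mpr
    intro p hpS
    exact pow_ne_zero _ (Finset.mem_filter.mp hpS).2.ne_zero
  have hRfact : ∀ p : ℕ, p.Prime → (∏ r ∈ S, r ^ (n / r)).factorization p = n / p := by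
    intro p hp
    rw [Nat.factorization_prod
      (fun r hr => pow_ne_zero _ (Finset.mem_filter.mp hr).2.ne_zero),
      Finsupp.finset_sum_apply]
    have hterm : ∀ r ∈ S, ((r ^ (n / r)).factorization) p =
        if r = p then n / p else 0 := by
      intro r hr
      have hr' : r.Prime := (Finset.mem_filter.mp hr).2
      rw [Nat.factorization_pow, Finsupp.smul_apply, hr'.factorization,
        Finsupp.single_apply]
      split_ifs with h
      · subst h; simp
      · simp
    rw [Finset.sum_congr rfl hterm, Finset.sum_ite_eq' S p (fun _ => n / p)]
    split_ifs with h
    · rfl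
    · have hnp : n < p := by
        by_contra hle
        exact h (Finset.mem_filter.mpr ⟨Finset.mem_range.mpr (by omega), hp⟩)
      exact (Nat.div_eq_of_lt hnp).symm
  constructor
  · intro p hp
    rw [← Nat.factorization_def _ hp]
    exact hmain p hp
  · apply Nat.eq_of_factorization_eq hqTot0 hR0
    intro p
    by_cases hp : p.Prime
    · rw [hmain p hp, hRfact p hp]
    · rw [Nat.factorization_eq_zero_of_not_prime _ hp,
        Nat.factorization_eq_zero_of_not_prime _ hp]
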